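/- arXiv:2507.13233 — 2 statements merged into one kernel-verified Lean document; each statement's English description precedes it below -/
import Mathlib

section
/- Let v be a unit vector in R^n, G a subgroup of O(n), u a unit vector with u not in the orbit Gv. Then u does not belong to conv(B(1/2) ∪ Gv), where B(1/2) is the closed ball of radius 1/2 centered at the origin. -/
open scoped RealInnerProductSpace Pointwise

/-- The action of an orthogonal matrix on Euclidean space. -/
noncomputable def act {n : ℕ} (g : Matrix.orthogonalGroup (Fin n) ℝ)
    (x : EuclideanSpace ℝ (Fin n)) : EuclideanSpace ℝ (Fin n) :=
  Matrix.toEuclideanLin (g : Matrix (Fin n) (Fin n) ℝ) x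

lemma act_norm {n : ℕ} (g : Matrix.orthogonalGroup (Fin n) ℝ)
    (x : EuclideanSpace ℝ (Fin n)) : ‖act g x‖ = ‖x‖ := by
  set M : Matrix (Fin n) (Fin n) ℝ := (g : Matrix (Fin n) (Fin n) ℝ) with hM
  have hMu : M.conjTranspose * M = 1 := g.2.1
  have h : ⟪act g x, act g x⟫ = ⟪x, x⟫ := by
    unfold act
    rw [← LinearMap.adjoint_inner_left, ← Matrix.toEuclideanLin_conjTranspose_eq_adjoint]
    rw [show Matrix.toEuclideanLin M.conjTranspose (Matrix.toEuclideanLin M x)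
        = Matrix.toEuclideanLin (M.conjTranspose * M) x by
      simp only [Matrix.toEuclideanLin_apply, Equiv.apply_symm_apply,
        Matrix.mulVec_mulVec]]
    rw [hMu]
    simp [Matrix.toEuclideanLin_apply]
  have h1 := real_inner_self_eq_norm_sq (act g x)
  have h2 := real_inner_self_eq_norm_sq x
  nlinarith [norm_nonneg (act g x), norm_nonneg x]

/-- If u is a unit vector not in the orbit Gv of a unit vector v, then u is not in
the convex hull of the union of the ball of radius 1/2 with the orbit Gv. -/
theorem stmt2 {n : ℕ} (G : Subgroup (Matrix.orthogonalGroup (Fin n) ℝ))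
    (v u : EuclideanSpace ℝ (Fin n)) (hv : ‖v‖ = 1) (hu : ‖u‖ = 1)
    (hne : ∀ g ∈ G, act g v ≠ u) :
    u ∉ convexHull ℝ
      (Metric.closedBall (0 : EuclideanSpace ℝ (Fin n)) (1/2) ∪
        {x | ∃ g ∈ G, act g v = x}) := by
  intro hmem
  set S := Metric.closedBall (0 : EuclideanSpace ℝ (Fin n)) (1/2) ∪
      {x | ∃ g ∈ G, act g v = x} with hS
  have hsub : S ⊆ Metric.closedBall (0 : EuclideanSpace ℝ (Fin n)) 1 := by
    rintro x (hx | ⟨g, _, rfl⟩)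
    · exact Metric.closedBall_subset_closedBall (by norm_num) hx
    · simp [Metric.mem_closedBall, dist_zero_right, act_norm, hv]
  have hhull : convexHull ℝ S ⊆ Metric.closedBall (0 : EuclideanSpace ℝ (Fin n)) 1 :=
    convexHull_min hsub (convex_closedBall _ _)
  have hext : u ∈ (convexHull ℝ S).extremePoints ℝ := by
    refine ⟨hmem, fun x hx y hy hseg => ?_⟩
    by_cases hxy : x = y
    · subst hxy
      rw [openSegment_same] at hseg
      exact hseg.symm
    · exfalso
      have : u ∈ Metric.ball (0 : EuclideanSpace ℝ (Fin n)) 1 :=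
        openSegment_subset_ball_of_ne (hhull hx) (hhull hy) hxy hseg
      rw [Metric.mem_ball, dist_zero_right, hu] at this
      exact lt_irrefl 1 this
  have : u ∈ S := extremePoints_convexHull_subset hext
  rcases this with h | ⟨g, hg, hgv⟩
  · rw [Metric.mem_closedBall, dist_zero_right, hu] at h
    norm_num at h
  · exact hne g hg hgv
end

section
/- Let G be a closed subgroup of O(n), n ≥ 2. Then G acts irreducibly on R^n (i.e., the only G-invariant linear subspaces are {0} and R^n) if and only if for every unit vector v, the orbit Gv is not contained in any closed hemisphere {x in S^{n-1} : <x,u> ≥ 0}, u a unit vector. -/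
open scoped RealInnerProductSpace Pointwise

section aux

variable {n : ℕ}

lemma act_mul (g h : Matrix.orthogonalGroup (Fin n) ℝ) (x : EuclideanSpace ℝ (Fin n)) :
    act (g * h) x = act g (act h x) := by
  simp [act, Matrix.toEuclideanLin_apply, Matrix.mulVec_mulVec]

lemma act_one (x : EuclideanSpace ℝ (Fin n)) :
    act (1 : Matrix.orthogonalGroup (Fin n) ℝ) x = x := by
  simp [act, Matrix.toEuclideanLin_apply]

lemma act_act_inv (g : Matrix.orthogonalGroup (Fin n) ℝ) (x : EuclideanSpace ℝ (Fin n)) :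
    act g (act g⁻¹ x) = x := by
  rw [← act_mul, mul_inv_cancel, act_one]

lemma inner_act_act (g : Matrix.orthogonalGroup (Fin n) ℝ) (x y : EuclideanSpace ℝ (Fin n)) :
    ⟪act g x, act g y⟫ = ⟪x, y⟫ := by
  have h : (Matrix.toEuclideanLin ((star g : Matrix (Fin n) (Fin n) ℝ))) =
      LinearMap.adjoint (Matrix.toEuclideanLin (g : Matrix (Fin n) (Fin n) ℝ)) := by
    rw [← Matrix.toEuclideanLin_conjTranspose_eq_adjoint]; congr 1
  have h2 : act g x = Matrix.toEuclideanLin (g : Matrix (Fin n) (Fin n) ℝ) x := rfl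
  rw [h2, ← LinearMap.adjoint_inner_right, ← h]
  show ⟪x, Matrix.toEuclideanLin (star g : Matrix (Fin n) (Fin n) ℝ) (act g y)⟫ = _
  have : Matrix.toEuclideanLin ((star g : Matrix (Fin n) (Fin n) ℝ)) (act g y) = y := by
    simp [act, Matrix.toEuclideanLin_apply, Matrix.mulVec_mulVec,
      Matrix.UnitaryGroup.star_mul_self g]
  rw [this]

lemma norm_act (g : Matrix.orthogonalGroup (Fin n) ℝ) (x : EuclideanSpace ℝ (Fin n)) :
    ‖act g x‖ = ‖x‖ := by
  have := inner_act_act g x x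
  rw [real_inner_self_eq_norm_sq, real_inner_self_eq_norm_sq] at this
  nlinarith [norm_nonneg (act g x), norm_nonneg x]

lemma inner_act_left (g : Matrix.orthogonalGroup (Fin n) ℝ) (x y : EuclideanSpace ℝ (Fin n)) :
    ⟪act g x, y⟫ = ⟪x, act g⁻¹ y⟫ := by
  rw [← inner_act_act g x (act g⁻¹ y), act_act_inv]

lemma compact_convexHull {E : Type*} [NormedAddCommGroup E] [NormedSpace ℝ E]
    [FiniteDimensional ℝ E] {s : Set E} (hs : IsCompact s) :
    IsCompact (convexHull ℝ s) := by
  rcases s.eq_empty_or_nonempty with rfl | ⟨x₀, hx₀⟩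
  · simp
  set N := Module.finrank ℝ E + 1 with hN
  set f : (Fin N → ℝ) × (Fin N → E) → E := fun p => ∑ j, p.1 j • p.2 j with hf
  have hfc : Continuous f := by
    apply continuous_finset_sum
    intro j _
    exact ((continuous_apply j).comp continuous_fst).smul
      ((continuous_apply j).comp continuous_snd)
  have hdom : IsCompact ((stdSimplex ℝ (Fin N)) ×ˢ (Set.univ.pi fun _ : Fin N => s)) :=
    (isCompact_stdSimplex ℝ _).prod (isCompact_univ_pi fun _ => hs)
  have himage : convexHull ℝ s
      = f '' ((stdSimplex ℝ (Fin N)) ×ˢ (Set.univ.pi fun _ : Fin N => s)) := by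
    apply Set.Subset.antisymm
    · intro x hx
      obtain ⟨ι, hι, z, w, hzs, hai, hw, hw1, hx⟩ := eq_pos_convex_span_of_mem_convexHull hx
      have hcard : Fintype.card ι ≤ N := by
        have := hai.card_le_finrank_succ
        refine this.trans ?_
        have : Module.finrank ℝ (vectorSpan ℝ (Set.range z)) ≤ Module.finrank ℝ E :=
          Submodule.finrank_le _
        omega
      obtain ⟨e⟩ := Function.Embedding.nonempty_of_card_le (β := Fin N) (by simpa using hcard)
      set w' : Fin N → ℝ := Function.extend e w 0 with hw'
      set z' : Fin N → E := Function.extend e z (fun _ => x₀) with hz'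
      refine ⟨(w', z'), ⟨?_, ?_⟩, ?_⟩
      · constructor
        · intro j
          show 0 ≤ Function.extend (⇑e) w 0 j
          by_cases h : ∃ i, e i = j
          · obtain ⟨i, rfl⟩ := h
            rw [e.injective.extend_apply]
            exact (hw i).le
          · rw [Function.extend_apply' _ _ _ h]
            exact le_refl 0
        · have hsub : Finset.univ.map e ⊆ Finset.univ := Finset.subset_univ _
          rw [← Finset.sum_subset hsub]
          · rw [Finset.sum_map]
            simp_rw [hw', e.injective.extend_apply]
            exact hw1
          · intro j _ hj
            rw [Finset.mem_map] at hj
            push_neg at hj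
            show Function.extend (⇑e) w 0 j = 0
            rw [Function.extend_apply' _ _ _ (by simpa using hj)]
            rfl
      · intro j _
        show Function.extend (⇑e) z (fun _ => x₀) j ∈ s
        by_cases h : ∃ i, e i = j
        · obtain ⟨i, rfl⟩ := h
          rw [e.injective.extend_apply]
          exact hzs ⟨i, rfl⟩
        · rw [Function.extend_apply' _ _ _ h]
          exact hx₀
      · show ∑ j, w' j • z' j = x
        have hsub : Finset.univ.map e ⊆ Finset.univ := Finset.subset_univ _
        rw [← Finset.sum_subset hsub]
        · rw [Finset.sum_map]
          simp_rw [hw', hz', e.injective.extend_apply]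
          exact hx
        · intro j _ hj
          rw [Finset.mem_map] at hj
          push_neg at hj
          rw [hw', Function.extend_apply' _ _ _ (by simpa using hj), Pi.zero_apply, zero_smul]
    · rintro x ⟨⟨w, z⟩, ⟨⟨hw0, hw1⟩, hz⟩, rfl⟩
      exact Convex.sum_mem (convex_convexHull ℝ s) (fun j _ => hw0 j) hw1
        (fun j _ => subset_convexHull ℝ s (hz j (Set.mem_univ j)))
  rw [himage]
  exact hdom.image hfc

end aux

/-- For a closed subgroup G of O(n), n ≥ 2: G acts irreducibly on ℝⁿ iff for every
unit vector v, the orbit Gv is not contained in any closed hemisphere. -/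
theorem stmt12 {n : ℕ} (hn : 2 ≤ n) (G : Subgroup (Matrix.orthogonalGroup (Fin n) ℝ))
    (hGcl : IsClosed (G : Set (Matrix.orthogonalGroup (Fin n) ℝ))) :
    (∀ V : Submodule ℝ (EuclideanSpace ℝ (Fin n)),
        (∀ g ∈ G, V.map (Matrix.toEuclideanLin (g : Matrix (Fin n) (Fin n) ℝ)) = V) →
        V = ⊥ ∨ V = ⊤) ↔
    (∀ v : EuclideanSpace ℝ (Fin n), ‖v‖ = 1 →
      ¬ ∃ u : EuclideanSpace ℝ (Fin n), ‖u‖ = 1 ∧ ∀ g ∈ G, 0 ≤ ⟪act g v, u⟫) := by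
  constructor
  · -- forward direction
    intro hirr v hv
    rintro ⟨u, hu, hmem⟩
    have hv0 : v ≠ 0 := by intro h; rw [h, norm_zero] at hv; norm_num at hv
    -- the orbit of v
    set O : Set (EuclideanSpace ℝ (Fin n)) := {x | ∃ g ∈ G, act g v = x} with hO
    have hvO : v ∈ O := ⟨1, G.one_mem, act_one v⟩
    have hOinv : ∀ g ∈ G, act g '' O = O := by
      intro g hg
      apply Set.Subset.antisymm
      · rintro _ ⟨_, ⟨h, hh, rfl⟩, rfl⟩
        exact ⟨g * h, G.mul_mem hg hh, act_mul g h v⟩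
      · rintro _ ⟨h, hh, rfl⟩
        exact ⟨act (g⁻¹ * h) v, ⟨g⁻¹ * h, G.mul_mem (G.inv_mem hg) hh, rfl⟩,
          by rw [← act_mul, ← mul_assoc, mul_inv_cancel, one_mul]⟩
    -- span of the orbit is all of space
    have hspan : Submodule.span ℝ O = ⊤ := by
      have hinv : ∀ g ∈ G, (Submodule.span ℝ O).map
          (Matrix.toEuclideanLin (g : Matrix (Fin n) (Fin n) ℝ)) = Submodule.span ℝ O := by
        intro g hg
        rw [Submodule.map_span]
        congr 1
        exact hOinv g hg
      rcases hirr (Submodule.span ℝ O) hinv with h | h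
      · exfalso
        have hvb : v ∈ (⊥ : Submodule ℝ (EuclideanSpace ℝ (Fin n))) :=
          h ▸ Submodule.subset_span hvO
        exact hv0 ((Submodule.mem_bot ℝ).mp hvb)
      · exact h
    -- every span element is ⊥ u₀ once orbit is
    have hperp : ∀ u₀ : EuclideanSpace ℝ (Fin n), (∀ g ∈ G, ⟪act g v, u₀⟫ = 0) →
        ⟪u₀, u₀⟫ = 0 := by
      intro u₀ h0
      have hmem : u₀ ∈ Submodule.span ℝ O := hspan ▸ Submodule.mem_top
      have : ∀ x ∈ Submodule.span ℝ O, ⟪x, u₀⟫ = 0 := by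
        intro x hx
        induction hx using Submodule.span_induction with
        | mem x hxO => obtain ⟨g, hg, rfl⟩ := hxO; exact h0 g hg
        | zero => simp
        | add x y _ _ h1 h2 => rw [inner_add_left, h1, h2]; ring
        | smul c x _ h1 => rw [real_inner_smul_left, h1]; ring
      exact this u₀ hmem
    -- the set of hemisphere poles
    set A : Set (EuclideanSpace ℝ (Fin n)) :=
      {w | ‖w‖ = 1 ∧ ∀ g ∈ G, 0 ≤ ⟪act g v, w⟫} with hA
    have huA : u ∈ A := ⟨hu, hmem⟩
    have hAinv : ∀ g ∈ G, act g '' A = A := by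
      have key : ∀ g ∈ G, act g '' A ⊆ A := by
        rintro g hg _ ⟨w, ⟨hw1, hw2⟩, rfl⟩
        refine ⟨by rw [norm_act, hw1], fun h hh => ?_⟩
        have he : act h v = act g (act (g⁻¹ * h) v) := by
          rw [← act_mul, ← mul_assoc, mul_inv_cancel, one_mul]
        rw [he, inner_act_act]
        exact hw2 _ (G.mul_mem (G.inv_mem hg) hh)
      intro g hg
      apply Set.Subset.antisymm (key g hg)
      intro w hw
      exact ⟨act g⁻¹ w, key g⁻¹ (G.inv_mem hg) ⟨w, hw, rfl⟩, act_act_inv g w⟩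
    have hAcl : IsClosed A := by
      have : A = {w : EuclideanSpace ℝ (Fin n) | ‖w‖ = 1} ∩
          ⋂ g ∈ G, {w : EuclideanSpace ℝ (Fin n) | 0 ≤ ⟪act g v, w⟫} := by
        ext w
        simp only [hA, Set.mem_inter_iff, Set.mem_setOf_eq, Set.mem_iInter]
      rw [this]
      apply IsClosed.inter
      · exact isClosed_eq continuous_norm continuous_const
      · apply isClosed_biInter
        intro g hg
        exact isClosed_le continuous_const (Continuous.inner continuous_const continuous_id)
    have hAcomp : IsCompact A := by
      apply IsCompact.of_isClosed_subset (isCompact_sphere (0 : EuclideanSpace ℝ (Fin n)) 1) hAcl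
      intro w hw
      simpa [mem_sphere_iff_norm] using hw.1
    -- the convex hull and its minimal norm point
    set C := convexHull ℝ A with hC
    have hCcomp : IsCompact C := compact_convexHull hAcomp
    have hCconv : Convex ℝ C := convex_convexHull ℝ A
    have hCne : C.Nonempty := ⟨u, subset_convexHull ℝ A huA⟩
    obtain ⟨p, hpC, hpmin'⟩ := hCcomp.exists_isMinOn hCne
      (continuous_norm.continuousOn (s := C))
    have hpmin : ∀ y ∈ C, ‖p‖ ≤ ‖y‖ := fun y hy => hpmin' hy
    have hCinv : ∀ g ∈ G, act g '' C = C := by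
      intro g hg
      have : act g '' C =
          (Matrix.toEuclideanLin (g : Matrix (Fin n) (Fin n) ℝ)) '' (convexHull ℝ A) := rfl
      rw [hC, this, LinearMap.image_convexHull]
      congr 1
      exact hAinv g hg
    -- p is a fixed point
    have hfix : ∀ g ∈ G, act g p = p := by
      intro g hg
      set q := act g p with hq
      have hqC : q ∈ C := (hCinv g hg) ▸ ⟨p, hpC, rfl⟩
      have hqn : ‖q‖ = ‖p‖ := norm_act g p
      have hmid : (1/2 : ℝ) • p + (1/2 : ℝ) • q ∈ C :=
        hCconv hpC hqC (by norm_num) (by norm_num) (by norm_num)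
      have h1 : ‖p‖ ≤ ‖(1/2 : ℝ) • p + (1/2 : ℝ) • q‖ := hpmin _ hmid
      have h2 : (1/2 : ℝ) • p + (1/2 : ℝ) • q = (1/2 : ℝ) • (p + q) := by
        rw [smul_add]
      rw [h2, norm_smul] at h1
      have hpar := parallelogram_law_with_norm ℝ p q
      have h1' : 2 * ‖p‖ ≤ ‖p + q‖ := by
        simp only [Real.norm_eq_abs] at h1
        rw [abs_of_pos (by norm_num : (0:ℝ) < 1/2)] at h1
        linarith
      have h3 : ‖p - q‖ * ‖p - q‖ ≤ 0 := by
        nlinarith [norm_nonneg (p + q), norm_nonneg (p - q), norm_nonneg p]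
      have : ‖p - q‖ = 0 := by nlinarith [norm_nonneg (p - q)]
      have := norm_eq_zero.mp this
      exact (sub_eq_zero.mp this).symm
    -- p must be zero
    have hp0 : p = 0 := by
      by_contra hp0
      have hinv : ∀ g ∈ G, (Submodule.span ℝ {p}).map
          (Matrix.toEuclideanLin (g : Matrix (Fin n) (Fin n) ℝ)) = Submodule.span ℝ {p} := by
        intro g hg
        rw [Submodule.map_span, Set.image_singleton]
        have hfp : Matrix.toEuclideanLin (g : Matrix (Fin n) (Fin n) ℝ) p = p := hfix g hg
        rw [hfp]
      rcases hirr (Submodule.span ℝ {p}) hinv with h | h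
      · exact hp0 (Submodule.span_singleton_eq_bot.mp h)
      · have h1 : Module.finrank ℝ (Submodule.span ℝ {p}) = 1 :=
          finrank_span_singleton hp0
        rw [h, finrank_top, finrank_euclideanSpace_fin] at h1
        omega
    -- extract an exact convex combination for 0
    rw [hp0] at hpC
    rw [hC, convexHull_eq] at hpC
    obtain ⟨ι, t, w, z, hw0, hw1, hzA, hcm⟩ := hpC
    rw [Finset.centerMass_eq_of_sum_1 _ _ hw1] at hcm
    -- find an index with positive weight
    have hex : ∃ i ∈ t, 0 < w i := by
      by_contra h
      push_neg at h
      have : ∑ i ∈ t, w i = 0 :=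
        Finset.sum_eq_zero fun i hi => le_antisymm (h i hi) (hw0 i hi)
      rw [hw1] at this
      norm_num at this
    obtain ⟨i₀, hi₀t, hi₀⟩ := hex
    -- every group element has zero inner product with z i₀
    have hzero : ∀ g ∈ G, ⟪act g v, z i₀⟫ = 0 := by
      intro g hg
      have hsum : ∑ i ∈ t, w i * ⟪act g v, z i⟫ = 0 := by
        have h0 : ⟪act g v, (0 : EuclideanSpace ℝ (Fin n))⟫ = 0 := inner_zero_right _
        rw [← hcm, inner_sum] at h0
        simp_rw [real_inner_smul_right] at h0
        exact h0
      have hterm : ∀ i ∈ t, w i * ⟪act g v, z i⟫ = 0 :=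
        (Finset.sum_eq_zero_iff_of_nonneg
          (fun i hi => mul_nonneg (hw0 i hi) ((hzA i hi).2 g hg))).mp hsum
      have := hterm i₀ hi₀t
      exact (mul_eq_zero.mp this).resolve_left (ne_of_gt hi₀)
    have := hperp (z i₀) hzero
    rw [real_inner_self_eq_norm_sq, (hzA i₀ hi₀t).1] at this
    norm_num at this
  · -- reverse direction
    intro hrhs V hV
    by_contra h
    push_neg at h
    obtain ⟨hVbot, hVtop⟩ := h
    obtain ⟨v, hvV, hv0⟩ := Submodule.exists_mem_ne_zero_of_ne_bot hVbot
    have hVperp : Vᗮ ≠ ⊥ := by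
      intro h
      exact hVtop (Submodule.orthogonal_eq_bot_iff.mp h)
    obtain ⟨u, huV, hu0⟩ := Submodule.exists_mem_ne_zero_of_ne_bot hVperp
    set v' := ‖v‖⁻¹ • v with hv'
    set u' := ‖u‖⁻¹ • u with hu'
    have hv'1 : ‖v'‖ = 1 := norm_smul_inv_norm hv0
    have hu'1 : ‖u'‖ = 1 := norm_smul_inv_norm hu0
    apply hrhs v' hv'1
    refine ⟨u', hu'1, fun g hg => ?_⟩
    have hv'V : v' ∈ V := V.smul_mem _ hvV
    have hu'V : u' ∈ Vᗮ := Vᗮ.smul_mem _ huV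
    have hgv : act g v' ∈ V := by
      have := hV g hg
      rw [← this]
      exact Submodule.mem_map_of_mem hv'V
    have : ⟪act g v', u'⟫ = 0 :=
      Submodule.inner_right_of_mem_orthogonal hgv hu'V
    rw [this]
end
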